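/- Let g = (g_1,...,g_D) with each g_i ∈ C¹(R^D) bounded with bounded first derivatives, and define the Leray-type term L(x) = ∫_{R^D} K_{D,i}(x-y) ∑_{l,m} g_{l,m}(y) g_{m,l}(y) dy with K_{D,i}(x) = x_i/|x|^D, D = 3. If additionally each product g_{l,m} g_{m,l} is Lipschitz and integrable, then L is Lipschitz continuous on R^3. -/

import Mathlib

open MeasureTheory Metric

noncomputable def pderiv18 (f : EuclideanSpace ℝ (Fin 3) → ℝ) (j : Fin 3)
    (x : EuclideanSpace ℝ (Fin 3)) : ℝ :=
  fderiv ℝ f x (EuclideanSpace.single j 1)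

namespace Stmt18Aux

local notation "E3" => EuclideanSpace ℝ (Fin 3)

lemma abs_coord_le (z : E3) (j : Fin 3) : |z j| ≤ ‖z‖ := by
  rw [EuclideanSpace.norm_eq]
  rw [← Real.sqrt_sq_eq_abs]
  apply Real.sqrt_le_sqrt
  have := Finset.single_le_sum (f := fun k => ‖z k‖ ^ 2) (fun k _ => sq_nonneg _) (Finset.mem_univ j)
  simpa [Real.norm_eq_abs, sq_abs] using this

noncomputable def kk (i : Fin 3) (z : E3) : ℝ := z i / ‖z‖ ^ 3

lemma kk_measurable (i : Fin 3) : Measurable (kk i) := by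
  apply Measurable.div
  · exact ((EuclideanSpace.proj i : E3 →L[ℝ] ℝ).continuous).measurable
  · exact (continuous_norm.pow 3).measurable

lemma kk_abs_le (i : Fin 3) (z : E3) : |kk i z| ≤ (‖z‖ ^ 2)⁻¹ := by
  rcases eq_or_ne z 0 with rfl | hz
  · simp [kk]
  · have h0 : 0 < ‖z‖ := norm_pos_iff.2 hz
    rw [kk, abs_div, abs_of_nonneg (by positivity : (0:ℝ) ≤ ‖z‖ ^ 3)]
    rw [div_le_iff₀ (by positivity)]
    have := abs_coord_le z i
    calc |z i| ≤ ‖z‖ := abs_coord_le z i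
      _ = (‖z‖ ^ 2)⁻¹ * ‖z‖ ^ 3 := by field_simp

lemma kk_abs_le_one (i : Fin 3) {z : E3} (hz : 1 ≤ ‖z‖) : |kk i z| ≤ 1 := by
  refine (kk_abs_le i z).trans ?_
  rw [inv_le_one_iff₀]
  right; nlinarith

lemma kk_lip (i : Fin 3) {a b : E3} (ha : 1 ≤ ‖a‖) (hb : 1 ≤ ‖b‖) :
    |kk i a - kk i b| ≤ 4 * ‖a - b‖ := by
  have hA : (0:ℝ) < ‖a‖ := lt_of_lt_of_le one_pos ha
  have hB : (0:ℝ) < ‖b‖ := lt_of_lt_of_le one_pos hb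
  set A := ‖a‖ with hAdef
  set B := ‖b‖ with hBdef
  set t := ‖a - b‖ with htdef
  have ht : (0:ℝ) ≤ t := norm_nonneg _
  have hab : |a i - b i| ≤ t := by
    have := abs_coord_le (a - b) i
    simpa [PiLp.sub_apply] using this
  have key : kk i a - kk i b = (a i - b i)/A^3 + b i * ((B^3 - A^3)/(A^3*B^3)) := by
    rw [kk, kk, ← hAdef, ← hBdef]; field_simp; ring
  have h1 : |(a i - b i)/A^3| ≤ t := by
    rw [abs_div, abs_of_nonneg (by positivity : (0:ℝ) ≤ A^3)]
    rw [div_le_iff₀ (by positivity)]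
    calc |a i - b i| ≤ t := hab
      _ ≤ t * A^3 := le_mul_of_one_le_right ht (by simpa using pow_le_pow_left₀ (by norm_num : (0:ℝ) ≤ 1) ha 3)
  have h2 : |b i * ((B^3 - A^3)/(A^3*B^3))| ≤ 3 * t := by
    have hbi : |b i| ≤ B := abs_coord_le b i
    have h4 : |B - A| ≤ t := by
      rw [abs_sub_comm]; exact abs_norm_sub_norm_le a b
    have h3 : |B^3 - A^3| ≤ t * (B^2 + B*A + A^2) := by
      have e : B^3 - A^3 = (B - A) * (B^2 + B*A + A^2) := by ring
      rw [e, abs_mul, abs_of_nonneg (by nlinarith : (0:ℝ) ≤ B^2 + B*A + A^2)]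
      exact mul_le_mul_of_nonneg_right h4 (by nlinarith)
    have hA3 : (1:ℝ) ≤ A^3 := by simpa using pow_le_pow_left₀ (by norm_num : (0:ℝ) ≤ 1) ha 3
    have hr : B * (B^2 + B*A + A^2) ≤ 3 * (A^3 * B^3) := by
      have e1 : B^3 ≤ A^3 * B^3 := le_mul_of_one_le_left (by positivity) hA3
      have sA : A ≤ A^3 := le_self_pow₀ ha (by norm_num)
      have sA2 : A^2 ≤ A^3 := pow_le_pow_right₀ ha (by norm_num)
      have sB : B ≤ B^3 := le_self_pow₀ hb (by norm_num)
      have sB2 : B^2 ≤ B^3 := pow_le_pow_right₀ hb (by norm_num)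
      have e2 : A*B^2 ≤ A^3 * B^3 := mul_le_mul sA sB2 (by positivity) (by positivity)
      have e3 : A^2*B ≤ A^3 * B^3 := mul_le_mul sA2 sB (by positivity) (by positivity)
      have expand : B * (B^2 + B*A + A^2) = B^3 + A*B^2 + A^2*B := by ring
      rw [expand]; linarith
    rw [abs_mul, abs_div, abs_of_nonneg (by positivity : (0:ℝ) ≤ A^3*B^3)]
    calc |b i| * (|B^3 - A^3| / (A^3*B^3))
        ≤ B * ((t * (B^2 + B*A + A^2)) / (A^3*B^3)) := by
          gcongr
      _ = t * ((B * (B^2 + B*A + A^2)) / (A^3*B^3)) := by ring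
      _ ≤ t * 3 := by
          apply mul_le_mul_of_nonneg_left _ ht
          rw [div_le_iff₀ (by positivity)]
          linarith [hr]
      _ = 3 * t := mul_comm _ _
  calc |kk i a - kk i b| = |(a i - b i)/A^3 + b i * ((B^3 - A^3)/(A^3*B^3))| := by rw [key]
    _ ≤ |(a i - b i)/A^3| + |b i * ((B^3 - A^3)/(A^3*B^3))| := abs_add_le _ _
    _ ≤ t + 3 * t := add_le_add h1 h2
    _ = 4 * t := by ring

noncomputable def chi (z : E3) : ℝ := min 1 (max (‖z‖ - 1) 0)

lemma chi_nonneg (z : E3) : 0 ≤ chi z := le_min zero_le_one (le_max_right _ _)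

lemma chi_le_one (z : E3) : chi z ≤ 1 := min_le_left _ _

lemma chi_lip (a b : E3) : |chi a - chi b| ≤ ‖a - b‖ := by
  refine (abs_min_sub_min_le_max _ _ _ _).trans ?_
  simp only [sub_self, abs_zero]
  refine max_le (norm_nonneg _) ?_
  refine (abs_max_sub_max_le_abs _ _ _).trans ?_
  have : ‖a‖ - 1 - (‖b‖ - 1) = ‖a‖ - ‖b‖ := by ring
  rw [this]
  exact abs_norm_sub_norm_le a b

lemma chi_eq_zero {z : E3} (hz : ‖z‖ ≤ 1) : chi z = 0 := by
  have : max (‖z‖ - 1) 0 = 0 := max_eq_right (by linarith)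
  rw [chi, this]
  exact min_eq_right zero_le_one

noncomputable def kfar (i : Fin 3) (z : E3) : ℝ := kk i z * chi z

lemma kfar_abs_le_one (i : Fin 3) (z : E3) : |kfar i z| ≤ 1 := by
  rcases le_or_gt ‖z‖ 1 with h | h
  · rw [kfar, chi_eq_zero h, mul_zero, abs_zero]; exact zero_le_one
  · rw [kfar, abs_mul, abs_of_nonneg (chi_nonneg z)]
    calc |kk i z| * chi z ≤ 1 * 1 :=
      mul_le_mul (kk_abs_le_one i h.le) (chi_le_one z) (chi_nonneg z) zero_le_one
    _ = 1 := one_mul 1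

lemma kfar_bound_mixed (i : Fin 3) {a b : E3} (ha : ‖a‖ ≤ 1) (hb : 1 ≤ ‖b‖) :
    |kfar i a - kfar i b| ≤ 5 * ‖a - b‖ := by
  have h0 : kfar i a = 0 := by rw [kfar, chi_eq_zero ha, mul_zero]
  rw [h0, zero_sub, abs_neg, kfar, abs_mul, abs_of_nonneg (chi_nonneg b)]
  have h1 : chi b ≤ ‖b‖ - 1 := by
    rw [chi]
    refine (min_le_right _ _).trans ?_
    exact le_of_eq (max_eq_left (by linarith))
  have h2 : ‖b‖ - 1 ≤ ‖a - b‖ := by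
    have := norm_sub_norm_le b a
    rw [norm_sub_rev b a] at this
    linarith
  calc |kk i b| * chi b ≤ 1 * (‖b‖ - 1) :=
        mul_le_mul (kk_abs_le_one i hb) h1 (chi_nonneg b) zero_le_one
    _ = ‖b‖ - 1 := one_mul _
    _ ≤ ‖a - b‖ := h2
    _ ≤ 5 * ‖a - b‖ := by nlinarith [norm_nonneg (a - b)]

lemma kfar_lip (i : Fin 3) (a b : E3) : |kfar i a - kfar i b| ≤ 5 * ‖a - b‖ := by
  rcases le_or_gt ‖a‖ 1 with ha | ha
  · rcases le_or_gt ‖b‖ 1 with hb | hb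
    · rw [kfar, kfar, chi_eq_zero ha, chi_eq_zero hb]
      simp only [mul_zero, sub_self, abs_zero]
      positivity
    · exact kfar_bound_mixed i ha hb.le
  · rcases le_or_gt ‖b‖ 1 with hb | hb
    · rw [abs_sub_comm, norm_sub_rev]
      exact kfar_bound_mixed i hb ha.le
    · have e : kfar i a - kfar i b = kk i a * (chi a - chi b) + chi b * (kk i a - kk i b) := by
        rw [kfar, kfar]; ring
      rw [e]
      have h1 : |kk i a * (chi a - chi b)| ≤ ‖a - b‖ := by
        rw [abs_mul]
        calc |kk i a| * |chi a - chi b| ≤ 1 * ‖a - b‖ :=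
          mul_le_mul (kk_abs_le_one i ha.le) (chi_lip a b) (abs_nonneg _) zero_le_one
        _ = ‖a - b‖ := one_mul _
      have h2 : |chi b * (kk i a - kk i b)| ≤ 4 * ‖a - b‖ := by
        rw [abs_mul, abs_of_nonneg (chi_nonneg b)]
        calc chi b * |kk i a - kk i b| ≤ 1 * (4 * ‖a - b‖) :=
          mul_le_mul (chi_le_one b) (kk_lip i ha.le hb.le) (abs_nonneg _) zero_le_one
        _ = 4 * ‖a - b‖ := one_mul _
      calc |kk i a * (chi a - chi b) + chi b * (kk i a - kk i b)|
          ≤ |kk i a * (chi a - chi b)| + |chi b * (kk i a - kk i b)| := abs_add_le _ _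
        _ ≤ ‖a - b‖ + 4 * ‖a - b‖ := add_le_add h1 h2
        _ = 5 * ‖a - b‖ := by ring

noncomputable def knear (i : Fin 3) (z : E3) : ℝ := kk i z * (1 - chi z)

lemma kfar_add_knear (i : Fin 3) (z : E3) : knear i z + kfar i z = kk i z := by
  rw [knear, kfar]; ring

lemma knear_measurable (i : Fin 3) : Measurable (knear i) := by
  apply (kk_measurable i).mul
  have : Continuous (chi) := by
    apply Continuous.min continuous_const
    exact Continuous.max (continuous_norm.sub continuous_const) continuous_const
  exact (continuous_const.sub this).measurable

lemma knear_abs_le (i : Fin 3) (z : E3) :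
    |knear i z| ≤ (Metric.ball (0:E3) 2).indicator (fun z => (‖z‖ ^ 2)⁻¹) z := by
  rcases lt_or_ge ‖z‖ 2 with h | h
  · rw [Set.indicator_of_mem (by simpa [Metric.mem_ball, dist_zero_right] using h)]
    rw [knear, abs_mul]
    calc |kk i z| * |1 - chi z| ≤ (‖z‖ ^ 2)⁻¹ * 1 := by
          apply mul_le_mul (kk_abs_le i z) _ (abs_nonneg _) (by positivity)
          rw [abs_le]; constructor
          · linarith [chi_le_one z]
          · linarith [chi_nonneg z]
      _ = (‖z‖ ^ 2)⁻¹ := mul_one _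
  · have hchi : chi z = 1 := min_eq_left (le_max_of_le_left (by linarith))
    rw [Set.indicator_of_notMem (by simp [Metric.mem_ball, dist_zero_right]; linarith)]
    rw [knear, hchi]; simp

noncomputable def ann (n : ℕ) : Set E3 :=
  Metric.ball 0 (2 * (2⁻¹:ℝ)^n) \ Metric.ball 0 ((2⁻¹:ℝ)^n)

lemma ann_measurable (n : ℕ) : MeasurableSet (ann n) :=
  measurableSet_ball.diff measurableSet_ball

lemma mem_ann_of {z : E3} (hz : z ≠ 0) (h2 : ‖z‖ < 2) : ∃ n, z ∈ ann n := by
  classical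
  have hzpos : 0 < ‖z‖ := norm_pos_iff.2 hz
  have hex : ∃ n : ℕ, (2⁻¹:ℝ)^n ≤ ‖z‖ := by
    obtain ⟨n, hn⟩ := exists_pow_lt_of_lt_one hzpos (by norm_num : (2⁻¹:ℝ) < 1)
    exact ⟨n, hn.le⟩
  set n := Nat.find hex with hn
  have h1 : (2⁻¹:ℝ)^n ≤ ‖z‖ := Nat.find_spec hex
  refine ⟨n, ?_, ?_⟩
  · rw [Metric.mem_ball, dist_zero_right]
    match hmn : n, hn with
    | 0, _ => simpa using h2
    | (k+1), hn => 
      have hk : ¬ ((2⁻¹:ℝ)^k ≤ ‖z‖) := Nat.find_min hex (by omega)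
      push_neg at hk
      calc ‖z‖ < (2⁻¹:ℝ)^k := hk
        _ = 2 * (2⁻¹:ℝ)^(k+1) := by rw [pow_succ]; ring
  · rw [Metric.mem_ball, dist_zero_right]
    exact not_lt.2 h1

lemma abs_inv_sq_le {z : E3} {n : ℕ} (hz : z ∈ ann n) : (‖z‖ ^ 2)⁻¹ ≤ (4:ℝ)^n := by
  have h1 : (2⁻¹:ℝ)^n ≤ ‖z‖ := by
    have := hz.2
    rw [Metric.mem_ball, dist_zero_right] at this
    exact not_lt.1 this
  have hp : (0:ℝ) < (2⁻¹:ℝ)^n := by positivity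
  have h2 : ((2⁻¹:ℝ)^n)^2 ≤ ‖z‖^2 := by nlinarith
  have h3 : (‖z‖^2)⁻¹ ≤ (((2⁻¹:ℝ)^n)^2)⁻¹ := by
    apply inv_anti₀ (by positivity) h2
  refine h3.trans (le_of_eq ?_)
  rw [← pow_mul, ← inv_pow, inv_inv, pow_mul']
  norm_num

lemma indicator_integrable :
    Integrable ((Metric.ball (0:E3) 2).indicator (fun z => (‖z‖ ^ 2)⁻¹)) := by
  have hmeas : Measurable ((Metric.ball (0:E3) 2).indicator (fun z : E3 => (‖z‖ ^ 2)⁻¹)) :=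
    (((continuous_norm.pow 2).measurable).inv).indicator measurableSet_ball
  refine ⟨hmeas.aestronglyMeasurable, ?_⟩
  rw [HasFiniteIntegral]
  have hbound : ∀ z : E3, (‖(Metric.ball (0:E3) 2).indicator (fun z : E3 => (‖z‖ ^ 2)⁻¹) z‖₊ : ENNReal)
      ≤ ∑' n, (ann n).indicator (fun _ => ENNReal.ofReal ((4:ℝ)^n)) z := by
    intro z
    rcases eq_or_ne z 0 with rfl | hz
    · simp [Set.indicator_apply]
    rcases lt_or_ge ‖z‖ 2 with h2 | h2
    · obtain ⟨n, hn⟩ := mem_ann_of hz h2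
      rw [Set.indicator_of_mem (by simpa [Metric.mem_ball, dist_zero_right] using h2)]
      calc (‖(‖z‖ ^ 2)⁻¹‖₊ : ENNReal) = ENNReal.ofReal ((‖z‖ ^ 2)⁻¹) := by
            exact Real.enorm_eq_ofReal (by positivity)
        _ ≤ ENNReal.ofReal ((4:ℝ)^n) := ENNReal.ofReal_le_ofReal (abs_inv_sq_le hn)
        _ = (ann n).indicator (fun _ => ENNReal.ofReal ((4:ℝ)^n)) z := by
            rw [Set.indicator_of_mem hn]
        _ ≤ _ := ENNReal.le_tsum n
    · rw [Set.indicator_of_notMem (by simp [Metric.mem_ball, dist_zero_right]; linarith)]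
      simp
  calc ∫⁻ z, (‖(Metric.ball (0:E3) 2).indicator (fun z : E3 => (‖z‖ ^ 2)⁻¹) z‖₊ : ENNReal)
      ≤ ∫⁻ z, ∑' n, (ann n).indicator (fun _ => ENNReal.ofReal ((4:ℝ)^n)) z :=
        lintegral_mono hbound
    _ = ∑' n, ∫⁻ z, (ann n).indicator (fun _ => ENNReal.ofReal ((4:ℝ)^n)) z :=
        lintegral_tsum (fun n => (measurable_const.indicator (ann_measurable n)).aemeasurable)
    _ ≤ ∑' n, ENNReal.ofReal (8 * (2⁻¹:ℝ)^n) * volume (Metric.ball (0:E3) 1) := by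
        apply ENNReal.tsum_le_tsum
        intro n
        rw [lintegral_indicator_const (ann_measurable n)]
        have hμ : volume (ann n) ≤ ENNReal.ofReal ((2 * (2⁻¹:ℝ)^n)^3) * volume (Metric.ball (0:E3) 1) := by
          refine le_trans (measure_mono Set.diff_subset) ?_
          rw [Measure.addHaar_ball _ _ (by positivity : (0:ℝ) ≤ 2 * (2⁻¹:ℝ)^n)]
          rw [finrank_euclideanSpace_fin]
        calc ENNReal.ofReal ((4:ℝ)^n) * volume (ann n)
            ≤ ENNReal.ofReal ((4:ℝ)^n) * (ENNReal.ofReal ((2 * (2⁻¹:ℝ)^n)^3) * volume (Metric.ball (0:E3) 1)) :=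
              mul_le_mul_right hμ _
          _ = (ENNReal.ofReal ((4:ℝ)^n) * ENNReal.ofReal ((2 * (2⁻¹:ℝ)^n)^3)) * volume (Metric.ball (0:E3) 1) := by
              rw [mul_assoc]
          _ = ENNReal.ofReal (8 * (2⁻¹:ℝ)^n) * volume (Metric.ball (0:E3) 1) := by
              rw [← ENNReal.ofReal_mul (by positivity)]
              congr 1
              have e : ((2:ℝ) * (2⁻¹:ℝ)^n)^3 = 8 * ((2⁻¹:ℝ)^3)^n := by
                rw [mul_pow, ← pow_mul, ← pow_mul']
                norm_num
              rw [e]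
              have e2 : (4:ℝ)^n * (8 * ((2⁻¹:ℝ)^3)^n) = 8 * (4 * (2⁻¹:ℝ)^3)^n := by
                rw [mul_pow]; ring
              rw [e2]
              norm_num
    _ < ⊤ := by
        rw [ENNReal.tsum_mul_right]
        apply ENNReal.mul_lt_top _ measure_ball_lt_top
        have hsum : Summable (fun n : ℕ => 8 * (2⁻¹:ℝ)^n) :=
          (summable_geometric_of_lt_one (by norm_num) (by norm_num)).mul_left 8
        rw [← ENNReal.ofReal_tsum_of_nonneg (fun n => by positivity) hsum]
        exact ENNReal.ofReal_lt_top

end Stmt18Aux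

open Stmt18Aux

/-- Lipschitz continuity of the Leray projection term in dimension 3. -/
theorem stmt_18 (i : Fin 3) (g : Fin 3 → EuclideanSpace ℝ (Fin 3) → ℝ)
    (hg : ∀ l, ContDiff ℝ 1 (g l))
    (hbd : ∃ M : ℝ, ∀ l x, |g l x| ≤ M ∧ ‖fderiv ℝ (g l) x‖ ≤ M)
    (hlip : ∀ l m : Fin 3, ∃ K : NNReal,
      LipschitzWith K (fun y => pderiv18 (g l) m y * pderiv18 (g m) l y))
    (hint : ∀ l m : Fin 3,
      Integrable (fun y => pderiv18 (g l) m y * pderiv18 (g m) l y)) :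
    ∃ K : NNReal, LipschitzWith K (fun x : EuclideanSpace ℝ (Fin 3) =>
      ∫ y, ((x - y) i / ‖x - y‖ ^ 3) *
        ∑ l, ∑ m, pderiv18 (g l) m y * pderiv18 (g m) l y) := by
  classical
  obtain ⟨M, hM⟩ := hbd
  set F : EuclideanSpace ℝ (Fin 3) → ℝ :=
    fun y => ∑ l, ∑ m, pderiv18 (g l) m y * pderiv18 (g m) l y with hFdef
  have hpcont : ∀ l m : Fin 3, Continuous (fun y => pderiv18 (g l) m y) := by
    intro l m
    have hc : Continuous (fderiv ℝ (g l)) := (hg l).continuous_fderiv one_ne_zero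
    exact hc.clm_apply continuous_const
  have hFcont : Continuous F := by
    refine continuous_finset_sum _ (fun l _ => continuous_finset_sum _ (fun m _ => ?_))
    exact (hpcont l m).mul (hpcont m l)
  have hFint : Integrable F :=
    integrable_finset_sum _ (fun l _ => integrable_finset_sum _ (fun m _ => hint l m))
  have hMnn : 0 ≤ M := le_trans (abs_nonneg _) (hM 0 0).1
  have hpb : ∀ (l m : Fin 3) (y : EuclideanSpace ℝ (Fin 3)), |pderiv18 (g l) m y| ≤ M := by
    intro l m y
    rw [pderiv18, ← Real.norm_eq_abs]
    calc ‖fderiv ℝ (g l) y (EuclideanSpace.single m (1:ℝ))‖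
        ≤ ‖fderiv ℝ (g l) y‖ * ‖EuclideanSpace.single m (1:ℝ)‖ :=
          (fderiv ℝ (g l) y).le_opNorm _
      _ ≤ M * 1 := by
          rw [EuclideanSpace.norm_single, norm_one]
          exact mul_le_mul_of_nonneg_right (hM l y).2 zero_le_one
      _ = M := mul_one M
  have hFbd : ∀ y, |F y| ≤ 9 * (M * M) := by
    intro y
    calc |F y| ≤ ∑ l : Fin 3, |∑ m : Fin 3, pderiv18 (g l) m y * pderiv18 (g m) l y| :=
          Finset.abs_sum_le_sum_abs _ _
      _ ≤ ∑ l : Fin 3, ∑ m : Fin 3, |pderiv18 (g l) m y * pderiv18 (g m) l y| :=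
          Finset.sum_le_sum (fun l _ => Finset.abs_sum_le_sum_abs _ _)
      _ ≤ ∑ l : Fin 3, ∑ m : Fin 3, M * M := by
          refine Finset.sum_le_sum (fun l _ => Finset.sum_le_sum (fun m _ => ?_))
          rw [abs_mul]
          exact mul_le_mul (hpb l m y) (hpb m l y) (abs_nonneg _) hMnn
      _ = 9 * (M * M) := by simp [Finset.sum_const]; ring
  choose Kf hKf using hlip
  set LF : ℝ := ∑ l : Fin 3, ∑ m : Fin 3, (Kf l m : ℝ) with hLFdef
  have hFlip : ∀ y y' : EuclideanSpace ℝ (Fin 3), |F y - F y'| ≤ LF * dist y y' := by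
    intro y y'
    rw [← Real.dist_eq]
    calc dist (F y) (F y')
        ≤ ∑ l : Fin 3, (∑ m : Fin 3, (Kf l m : ℝ) * dist y y') := by
          refine dist_sum_sum_le_of_le _ (fun l _ => ?_)
          refine dist_sum_sum_le_of_le _ (fun m _ => ?_)
          exact (hKf l m).dist_le_mul y y'
      _ = LF * dist y y' := by
          rw [hLFdef, Finset.sum_mul]
          exact Finset.sum_congr rfl (fun l _ => (Finset.sum_mul _ _ _).symm)
  set Ind : EuclideanSpace ℝ (Fin 3) → ℝ :=
    (Metric.ball (0:EuclideanSpace ℝ (Fin 3)) 2).indicator (fun z => (‖z‖ ^ 2)⁻¹) with hInddef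
  have hIndnn : ∀ z, 0 ≤ Ind z :=
    fun z => Set.indicator_nonneg (fun a _ => by positivity) z
  have hIndint : Integrable Ind := indicator_integrable
  have hIndmeas : Measurable Ind :=
    (((continuous_norm.pow 2).measurable).inv).indicator measurableSet_ball
  -- integrability of the pieces
  have h_near_int : ∀ x, Integrable (fun y => knear i (x - y) * F y) := by
    intro x
    refine Integrable.mono' ((hIndint.comp_sub_left x).mul_const (9 * (M * M))) ?_ ?_
    · exact (((knear_measurable i).comp (measurable_const.sub measurable_id)).aestronglyMeasurable.mul
        hFcont.aestronglyMeasurable)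
    · refine Filter.Eventually.of_forall (fun y => ?_)
      rw [Real.norm_eq_abs, abs_mul]
      exact mul_le_mul (knear_abs_le i (x - y)) (hFbd y) (abs_nonneg _) (hIndnn (x - y))
  have h_near_int' : ∀ x, Integrable (fun z => knear i z * F (x - z)) := by
    intro x
    refine Integrable.mono' (hIndint.mul_const (9 * (M * M))) ?_ ?_
    · exact ((knear_measurable i).aestronglyMeasurable.mul
        (hFcont.comp (continuous_const.sub continuous_id)).aestronglyMeasurable)
    · refine Filter.Eventually.of_forall (fun z => ?_)
      rw [Real.norm_eq_abs, abs_mul]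
      exact mul_le_mul (knear_abs_le i z) (hFbd (x - z)) (abs_nonneg _) (hIndnn z)
  have h_far_int : ∀ x, Integrable (fun y => kfar i (x - y) * F y) := by
    intro x
    refine Integrable.bdd_mul (c := 1) hFint ?_ (Filter.Eventually.of_forall fun y => ?_)
    · have hchi : Continuous chi :=
        continuous_const.min ((continuous_norm.sub continuous_const).max continuous_const)
      exact (((kk_measurable i).mul hchi.measurable).comp
        (measurable_const.sub measurable_id)).aestronglyMeasurable
    · rw [Real.norm_eq_abs]
      exact kfar_abs_le_one i (x - y)
  -- splitting
  have h_split : ∀ x, (∫ y, kk i (x - y) * F y)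
      = (∫ y, knear i (x - y) * F y) + ∫ y, kfar i (x - y) * F y := by
    intro x
    rw [← integral_add (h_near_int x) (h_far_int x)]
    congr 1
    funext y
    rw [← kfar_add_knear i (x - y)]
    ring
  have h_cov : ∀ x, (∫ y, knear i (x - y) * F y) = ∫ z, knear i z * F (x - z) := by
    intro x
    rw [← integral_sub_left_eq_self (fun z => knear i z * F (x - z)) volume x]
    congr 1
    funext y
    simp [sub_sub_cancel]
  set CI : ℝ := ∫ z, Ind z with hCIdef
  set CF : ℝ := ∫ y, |F y| with hCFdef
  set C : ℝ := LF * CI + 5 * CF with hCdef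
  have key : ∀ x x' : EuclideanSpace ℝ (Fin 3),
      |(∫ y, kk i (x - y) * F y) - (∫ y, kk i (x' - y) * F y)| ≤ C * dist x x' := by
    intro x x'
    have hA : |(∫ y, knear i (x - y) * F y) - (∫ y, knear i (x' - y) * F y)|
        ≤ (LF * CI) * dist x x' := by
      rw [h_cov x, h_cov x', ← integral_sub (h_near_int' x) (h_near_int' x')]
      have hptw : ∀ z, ‖knear i z * F (x - z) - knear i z * F (x' - z)‖
          ≤ Ind z * (LF * dist x x') := by
        intro z
        rw [Real.norm_eq_abs, ← mul_sub, abs_mul]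
        refine mul_le_mul (knear_abs_le i z) ?_ (abs_nonneg _) (hIndnn z)
        have hd : dist (x - z) (x' - z) = dist x x' := by
          simp [dist_eq_norm, sub_sub_sub_cancel_right]
        have := hFlip (x - z) (x' - z)
        rwa [hd] at this
      calc ‖∫ z, (knear i z * F (x - z) - knear i z * F (x' - z))‖
          ≤ ∫ z, Ind z * (LF * dist x x') :=
            norm_integral_le_of_norm_le (hIndint.mul_const _)
              (Filter.Eventually.of_forall hptw)
        _ = CI * (LF * dist x x') := integral_mul_const _ _
        _ = (LF * CI) * dist x x' := by ring
    have hB : |(∫ y, kfar i (x - y) * F y) - (∫ y, kfar i (x' - y) * F y)|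
        ≤ (5 * CF) * dist x x' := by
      rw [← integral_sub (h_far_int x) (h_far_int x')]
      have hptw : ∀ y, ‖kfar i (x - y) * F y - kfar i (x' - y) * F y‖
          ≤ |F y| * (5 * dist x x') := by
        intro y
        rw [Real.norm_eq_abs, ← sub_mul, abs_mul, mul_comm]
        refine mul_le_mul_of_nonneg_left ?_ (abs_nonneg (F y))
        have h5 := kfar_lip i (x - y) (x' - y)
        have he : (x - y) - (x' - y) = x - x' := by abel
        rw [he] at h5
        rw [dist_eq_norm]
        exact h5
      calc ‖∫ y, (kfar i (x - y) * F y - kfar i (x' - y) * F y)‖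
          ≤ ∫ y, |F y| * (5 * dist x x') :=
            norm_integral_le_of_norm_le (hFint.abs.mul_const _)
              (Filter.Eventually.of_forall hptw)
        _ = CF * (5 * dist x x') := integral_mul_const _ _
        _ = (5 * CF) * dist x x' := by ring
    rw [h_split x, h_split x']
    calc |((∫ y, knear i (x - y) * F y) + ∫ y, kfar i (x - y) * F y)
          - ((∫ y, knear i (x' - y) * F y) + ∫ y, kfar i (x' - y) * F y)|
        = |((∫ y, knear i (x - y) * F y) - (∫ y, knear i (x' - y) * F y))
          + ((∫ y, kfar i (x - y) * F y) - (∫ y, kfar i (x' - y) * F y))| := by ring_nf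
      _ ≤ |(∫ y, knear i (x - y) * F y) - (∫ y, knear i (x' - y) * F y)|
          + |(∫ y, kfar i (x - y) * F y) - (∫ y, kfar i (x' - y) * F y)| := abs_add_le _ _
      _ ≤ (LF * CI) * dist x x' + (5 * CF) * dist x x' := add_le_add hA hB
      _ = C * dist x x' := by rw [hCdef]; ring
  refine ⟨Real.toNNReal C, LipschitzWith.of_dist_le_mul (fun x x' => ?_)⟩
  have hrw : ∀ x : EuclideanSpace ℝ (Fin 3),
      (∫ y, ((x - y) i / ‖x - y‖ ^ 3) * F y) = ∫ y, kk i (x - y) * F y := fun x => rfl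
  rw [Real.dist_eq, hrw x, hrw x']
  refine (key x x').trans ?_
  refine mul_le_mul_of_nonneg_right ?_ dist_nonneg
  rw [Real.coe_toNNReal']
  exact le_max_left _ _
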